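/- arXiv:1607.05516 — 7 statements merged into one kernel-verified Lean document; each statement's English description precedes it below -/
import Mathlib

section
/- Let E be a type, let V be a vector space over the two-element field GF(2) (ZMod 2), and let v : E → V. Call a finite set S ⊆ E dependent if the restriction of v to S is not linearly independent, and call a finite set a circuit if it is dependent but every proper subset of it is independent. Then for any two circuits C1 and C2, the symmetric difference C1 △ C2 can be partitioned into pairwise disjoint circuits (in particular, if C1 = C2 the symmetric difference is empty and the partition is empty). -/
/-- A finite set `C` is a circuit of the binary matroid represented by `v : E → V`
(over `GF(2)`) if `v` is not linearly independent on `C` but is linearly independent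
on every proper subset of `C`. -/
def BinaryCircuit {E V : Type*} [AddCommGroup V] [Module (ZMod 2) V]
    (v : E → V) (C : Finset E) : Prop :=
  ¬ LinearIndependent (ZMod 2) (fun x : {y // y ∈ C} => v x.1) ∧
    ∀ D ⊂ C, LinearIndependent (ZMod 2) (fun x : {y // y ∈ D} => v x.1)

lemma zmod2_ne_zero (a : ZMod 2) : a ≠ 0 ↔ a = 1 := by revert a; decide

lemma not_indep_iff {E V : Type*} [AddCommGroup V] [Module (ZMod 2) V]
    (v : E → V) (S : Finset E) [DecidableEq E] :
    ¬ LinearIndependent (ZMod 2) (fun x : {y // y ∈ S} => v x.1) ↔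
      ∃ T ⊆ S, T.Nonempty ∧ ∑ e ∈ T, v e = 0 := by
  classical
  rw [Fintype.not_linearIndependent_iff]
  constructor
  · rintro ⟨g, hg, i, hi⟩
    refine ⟨(S.attach.filter fun j => g j = 1).image Subtype.val, ?_, ?_, ?_⟩
    · intro x hx
      simp only [Finset.mem_image, Finset.mem_filter, Finset.mem_attach] at hx
      obtain ⟨⟨y, hy⟩, _, rfl⟩ := hx
      exact hy
    · exact ⟨i.1, Finset.mem_image.2 ⟨i, Finset.mem_filter.2 ⟨Finset.mem_attach _ _,
        (zmod2_ne_zero _).1 hi⟩, rfl⟩⟩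
    · rw [Finset.sum_image (fun a _ b _ h => Subtype.ext h)]
      rw [← hg]
      rw [Finset.sum_filter]
      apply Finset.sum_congr rfl
      intro j _
      by_cases h : g j = 1
      · simp [h]
      · have : g j = 0 := by
          by_contra h0
          exact h ((zmod2_ne_zero _).1 h0)
        simp [h, this]
  · rintro ⟨T, hTS, ⟨t, ht⟩, hsum⟩
    refine ⟨fun i => if i.1 ∈ T then 1 else 0, ?_, ⟨t, hTS ht⟩, by simp [ht]⟩
    rw [show (∑ i : {y // y ∈ S}, (if i.1 ∈ T then (1:ZMod 2) else 0) • v i.1)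
        = ∑ i ∈ S.attach, (if i.1 ∈ T then v i.1 else 0) from ?_]
    · rw [Finset.sum_attach S (fun e => if e ∈ T then v e else 0)]
      rw [← Finset.sum_filter, Finset.filter_mem_eq_inter,
        Finset.inter_eq_right.2 hTS, hsum]
    · apply Finset.sum_congr rfl
      intro j _
      by_cases h : j.1 ∈ T <;> simp [h]

lemma circuit_sum {E V : Type*} [DecidableEq E] [AddCommGroup V] [Module (ZMod 2) V]
    (v : E → V) (C : Finset E) (h : BinaryCircuit v C) :
    C.Nonempty ∧ ∑ e ∈ C, v e = 0 := by
  obtain ⟨T, hTC, hTne, hTsum⟩ := (not_indep_iff v C).1 h.1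
  have hTC' : T = C := by
    by_contra hne
    have hss : T ⊂ C := hTC.ssubset_of_ne hne
    exact (not_indep_iff v T).2 ⟨T, subset_rfl, hTne, hTsum⟩ (h.2 T hss)
  subst hTC'
  exact ⟨hTne, hTsum⟩

lemma exists_circuit {E V : Type*} [DecidableEq E] [AddCommGroup V] [Module (ZMod 2) V]
    (v : E → V) (S : Finset E) (hne : S.Nonempty) (hsum : ∑ e ∈ S, v e = 0) :
    ∃ C ⊆ S, C.Nonempty ∧ BinaryCircuit v C := by
  classical
  set 𝒜 := S.powerset.filter (fun T => T.Nonempty ∧ ∑ e ∈ T, v e = 0) with h𝒜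
  have hS𝒜 : S ∈ 𝒜 := by simp [h𝒜, hne, hsum]
  obtain ⟨C, hC𝒜, hCmin⟩ := Finset.exists_min_image 𝒜 Finset.card ⟨S, hS𝒜⟩
  simp only [h𝒜, Finset.mem_filter, Finset.mem_powerset] at hC𝒜
  obtain ⟨hCS, hCne, hCsum⟩ := hC𝒜
  refine ⟨C, hCS, hCne, (not_indep_iff v C).2 ⟨C, subset_rfl, hCne, hCsum⟩, ?_⟩
  intro D hD
  by_contra hdep
  obtain ⟨T, hTD, hTne, hTsum⟩ := (not_indep_iff v D).1 hdep
  have hT𝒜 : T ∈ 𝒜 := by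
    simp only [h𝒜, Finset.mem_filter, Finset.mem_powerset]
    exact ⟨(hTD.trans hD.subset).trans hCS, hTne, hTsum⟩
  have := hCmin T hT𝒜
  have hlt : T.card < C.card :=
    lt_of_le_of_lt (Finset.card_le_card hTD) (Finset.card_lt_card hD)
  omega

lemma decompose {E V : Type*} [DecidableEq E] [AddCommGroup V] [Module (ZMod 2) V]
    (v : E → V) : ∀ n (S : Finset E), S.card = n → ∑ e ∈ S, v e = 0 →
    ∃ 𝒞 : Finset (Finset E), (∀ C ∈ 𝒞, BinaryCircuit v C) ∧
      (𝒞 : Set (Finset E)).PairwiseDisjoint id ∧ 𝒞.biUnion id = S := by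
  classical
  intro n
  induction n using Nat.strong_induction_on with
  | _ n ih =>
    intro S hcard hsum
    rcases S.eq_empty_or_nonempty with rfl | hne
    · exact ⟨∅, by simp, by simp, by simp⟩
    · obtain ⟨C, hCS, hCne, hCcirc⟩ := exists_circuit v S hne hsum
      have hCsum := (circuit_sum v C hCcirc).2
      have hS'sum : ∑ e ∈ S \ C, v e = 0 := by
        rw [Finset.sum_sdiff_eq_sub hCS, hsum, hCsum, sub_zero]
      have hcard' : (S \ C).card < n := by
        rw [← hcard]
        exact Finset.card_lt_card (Finset.sdiff_ssubset hCS hCne)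
      obtain ⟨𝒞', h𝒞'circ, h𝒞'disj, h𝒞'un⟩ := ih _ hcard' (S \ C) rfl hS'sum
      have hsub : ∀ D ∈ 𝒞', D ⊆ S \ C := by
        intro D hD
        rw [← h𝒞'un]
        exact Finset.subset_biUnion_of_mem id hD
      refine ⟨insert C 𝒞', ?_, ?_, ?_⟩
      · intro D hD
        rcases Finset.mem_insert.1 hD with rfl | hD
        · exact hCcirc
        · exact h𝒞'circ D hD
      · rw [Finset.coe_insert]
        refine h𝒞'disj.insert ?_
        intro D hD _
        exact Finset.disjoint_left.2 fun x hxC hxD =>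
          (Finset.mem_sdiff.1 (hsub D hD hxD)).2 hxC
      · rw [Finset.biUnion_insert, h𝒞'un]
        simpa using Finset.union_sdiff_of_subset hCS

/-- In a binary matroid, the symmetric difference of two circuits is the union of a
family of pairwise disjoint circuits (possibly empty). -/
theorem binary_symmDiff_circuits_is_cycle {E V : Type*} [DecidableEq E]
    [AddCommGroup V] [Module (ZMod 2) V] (v : E → V) (C1 C2 : Finset E)
    (h1 : BinaryCircuit v C1) (h2 : BinaryCircuit v C2) :
    ∃ 𝒞 : Finset (Finset E), (∀ C ∈ 𝒞, BinaryCircuit v C) ∧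
      (𝒞 : Set (Finset E)).PairwiseDisjoint id ∧
      𝒞.biUnion id = symmDiff C1 C2 := by
  have h1s := (circuit_sum v C1 h1).2
  have h2s := (circuit_sum v C2 h2).2
  have hchar : ∀ x : V, x + x = 0 := by
    intro x
    rw [← two_smul (ZMod 2) x, show (2 : ZMod 2) = 0 by decide, zero_smul]
  have hsum : ∑ e ∈ symmDiff C1 C2, v e = 0 := by
    have hdisj : Disjoint (symmDiff C1 C2) (C1 ∩ C2) := by
      simpa using disjoint_symmDiff_inf C1 C2
    have hun : symmDiff C1 C2 ∪ (C1 ∩ C2) = C1 ∪ C2 := by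
      simpa using symmDiff_sup_inf C1 C2
    have e1 : ∑ e ∈ symmDiff C1 C2, v e + ∑ e ∈ C1 ∩ C2, v e
        = ∑ e ∈ C1 ∪ C2, v e := by
      rw [← Finset.sum_union hdisj, hun]
    have e2 : ∑ e ∈ C1 ∪ C2, v e + ∑ e ∈ C1 ∩ C2, v e
        = ∑ e ∈ C1, v e + ∑ e ∈ C2, v e := Finset.sum_union_inter
    have := hchar (∑ e ∈ C1 ∩ C2, v e)
    calc ∑ e ∈ symmDiff C1 C2, v e
        = ∑ e ∈ symmDiff C1 C2, v e + (∑ e ∈ C1 ∩ C2, v e + ∑ e ∈ C1 ∩ C2, v e) := by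
          rw [this, add_zero]
      _ = (∑ e ∈ symmDiff C1 C2, v e + ∑ e ∈ C1 ∩ C2, v e) + ∑ e ∈ C1 ∩ C2, v e := by
          abel
      _ = ∑ e ∈ C1, v e + ∑ e ∈ C2, v e := by rw [e1, e2]
      _ = 0 := by rw [h1s, h2s, add_zero]
  exact decompose v _ (symmDiff C1 C2) rfl hsum
end

section
/- Let M be a matroid with the property that for every two circuits C1, C2 of M the symmetric difference C1 △ C2 is a disjoint union of circuits of M (this property characterizes binary matroids). Let Z = {e1, e2, e3} be a circuit of M with e1, e2, e3 distinct, and let C be a circuit of M such that C ∩ Z = {e3}. If C △ Z is not a circuit of M, then C △ Z is a disjoint union of two circuits C1 and C2 of M containing e1 and e2 respectively, and moreover both C1 △ Z and C2 △ Z are circuits of M. -/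
/-- A circuit of a matroid is a minimal dependent set. -/
def Matroid.IsCircuit' {α : Type*} (M : Matroid α) (C : Set α) : Prop :=
  M.Dep C ∧ ∀ D ⊂ C, M.Indep D

/-- A cycle of a matroid is a (possibly empty) disjoint union of circuits. -/
def Matroid.IsCycle' {α : Type*} (M : Matroid α) (X : Set α) : Prop :=
  ∃ 𝒞 : Set (Set α), (∀ C ∈ 𝒞, M.IsCircuit' C) ∧
    𝒞.PairwiseDisjoint id ∧ X = ⋃₀ 𝒞

private lemma circEq {α : Type*} {M : Matroid α} {D C : Set α}
    (hD : M.IsCircuit' D) (hC : M.IsCircuit' C) (h : D ⊆ C) : D = C := by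
  by_contra hne
  exact hD.1.not_indep (hC.2 D (h.ssubset_of_ne hne))

private lemma symmDiff_triple_mem {α : Type*} (S : Set α) (a b c : α)
    (ha : a ∉ S) (hb : b ∉ S) (hc : c ∈ S) (x : α) :
    x ∈ symmDiff S {a, b, c} ↔ (x ∈ S ∧ x ≠ c) ∨ x = a ∨ x = b := by
  simp only [Set.mem_symmDiff, Set.mem_insert_iff, Set.mem_singleton_iff]
  constructor
  · rintro (⟨hxS, hx⟩ | ⟨(rfl | rfl | rfl), hxS⟩)
    · exact Or.inl ⟨hxS, fun h => hx (Or.inr (Or.inr h))⟩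
    · exact Or.inr (Or.inl rfl)
    · exact Or.inr (Or.inr rfl)
    · exact absurd hc hxS
  · rintro (⟨hxS, hxc⟩ | rfl | rfl)
    · refine Or.inl ⟨hxS, ?_⟩
      rintro (rfl | rfl | rfl)
      · exact ha hxS
      · exact hb hxS
      · exact hxc rfl
    · exact Or.inr ⟨Or.inl rfl, ha⟩
    · exact Or.inr ⟨Or.inr (Or.inl rfl), hb⟩

/-- Key step: if `C ∆ {a,b,c} = C1 ∪ C2` with `C1, C2` disjoint circuits, `a ∈ C1`,
`b ∈ C2`, then `C1 ∆ {a,b,c}` is a circuit. -/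
private lemma key {α : Type*} (M : Matroid α)
    (hbin : ∀ C1 C2 : Set α, M.IsCircuit' C1 → M.IsCircuit' C2 →
      M.IsCycle' (symmDiff C1 C2))
    (a b c : α) (hab : a ≠ b)
    (hZ : M.IsCircuit' {a, b, c}) (C : Set α) (hC : M.IsCircuit' C)
    (haC : a ∉ C) (hbC : b ∉ C) (hcC : c ∈ C)
    (C1 C2 : Set α) (hC1 : M.IsCircuit' C1) (hC2 : M.IsCircuit' C2)
    (hdisj : Disjoint C1 C2)
    (hU : symmDiff C {a, b, c} = C1 ∪ C2)
    (ha1 : a ∈ C1) (hb2 : b ∈ C2) :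
    M.IsCircuit' (symmDiff C1 {a, b, c}) := by
  have hXmem := symmDiff_triple_mem C a b c haC hbC hcC
  -- memberships in C1
  have hb1 : b ∉ C1 := fun h => (Set.disjoint_left.mp hdisj h) hb2
  have hc1 : c ∉ C1 := by
    intro h
    have : c ∈ symmDiff C {a, b, c} := hU ▸ Or.inl h
    rcases (hXmem c).mp this with ⟨_, hne⟩ | rfl | rfl
    · exact hne rfl
    · exact haC hcC
    · exact hbC hcC
  -- elements of C1 other than a lie in C \ {c}
  have hsub : ∀ x ∈ C1, x ≠ a → x ∈ C ∧ x ≠ c := by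
    intro x hx hxa
    have : x ∈ symmDiff C {a, b, c} := hU ▸ Or.inl hx
    rcases (hXmem x).mp this with h | rfl | rfl
    · exact h
    · exact absurd rfl hxa
    · exact absurd hx hb1
  -- rewrite {a,b,c} = {b,c,a} to use the membership lemma for symmDiff C1 _
  have hperm : ({a, b, c} : Set α) = {b, c, a} := by
    ext x; simp only [Set.mem_insert_iff, Set.mem_singleton_iff]; tauto
  have hYmem : ∀ x, x ∈ symmDiff C1 {a, b, c} ↔ (x ∈ C1 ∧ x ≠ a) ∨ x = b ∨ x = c := by
    intro x; rw [hperm]; exact symmDiff_triple_mem C1 b c a hb1 hc1 ha1 x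
  obtain ⟨𝒟, h𝒟circ, h𝒟disj, h𝒟U⟩ := hbin C1 {a, b, c} hC1 hZ
  -- each member of 𝒟 contains b or c
  have hmeet : ∀ D ∈ 𝒟, b ∈ D ∨ c ∈ D := by
    intro D hD
    by_contra h
    push_neg at h
    have hDsub : D ⊆ C1 \ {a} := by
      intro x hx
      have : x ∈ symmDiff C1 {a, b, c} := h𝒟U ▸ Set.subset_sUnion_of_mem hD hx
      rcases (hYmem x).mp this with ⟨h1, h2⟩ | rfl | rfl
      · exact ⟨h1, h2⟩
      · exact absurd hx h.1
      · exact absurd hx h.2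
    have hss : D ⊂ C1 := hDsub.trans_ssubset (Set.sdiff_singleton_ssubset.mpr ha1)
    exact (h𝒟circ D hD).1.not_indep (hC1.2 D hss)
  have hbY : b ∈ symmDiff C1 {a, b, c} := (hYmem b).mpr (Or.inr (Or.inl rfl))
  have hcY : c ∈ symmDiff C1 {a, b, c} := (hYmem c).mpr (Or.inr (Or.inr rfl))
  obtain ⟨D2, hD2m, hbD2⟩ := Set.mem_sUnion.mp (h𝒟U ▸ hbY)
  obtain ⟨D3, hD3m, hcD3⟩ := Set.mem_sUnion.mp (h𝒟U ▸ hcY)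
  by_cases heq : D2 = D3
  · -- 𝒟 = {D2}, so symmDiff C1 {a,b,c} = D2 is a circuit
    subst heq
    have hall : ∀ D ∈ 𝒟, D = D2 := by
      intro D hD
      by_contra hne
      have hdj := h𝒟disj hD hD2m hne
      rcases hmeet D hD with h | h
      · exact (Set.disjoint_left.mp hdj h) hbD2
      · exact (Set.disjoint_left.mp hdj h) hcD3
    have hYeq : symmDiff C1 {a, b, c} = D2 := by
      rw [h𝒟U]
      apply subset_antisymm
      · exact Set.sUnion_subset fun D hD => (hall D hD) ▸ subset_rfl
      · exact Set.subset_sUnion_of_mem hD2m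
    exact hYeq ▸ h𝒟circ D2 hD2m
  · -- two distinct members: derive a contradiction
    exfalso
    have hdj23 := h𝒟disj hD3m hD2m (Ne.symm heq)
    have hbD3 : b ∉ D3 := fun h => (Set.disjoint_left.mp hdj23 h) hbD2
    -- D3 ⊆ C
    have hD3C : D3 ⊆ C := by
      intro x hx
      have hxY : x ∈ symmDiff C1 {a, b, c} := h𝒟U ▸ Set.subset_sUnion_of_mem hD3m hx
      rcases (hYmem x).mp hxY with ⟨h1, h2⟩ | rfl | rfl
      · exact (hsub x h1 h2).1
      · exact absurd hx hbD3
      · exact hcC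
    have hD3eq : D3 = C := circEq (h𝒟circ D3 hD3m) hC hD3C
    -- hence C ⊆ C1 ∪ {c}
    have hCsub : ∀ x ∈ C, x ≠ c → x ∈ C1 := by
      intro x hx hxc
      have hxY : x ∈ symmDiff C1 {a, b, c} := h𝒟U ▸ Set.subset_sUnion_of_mem hD3m (hD3eq ▸ hx)
      rcases (hYmem x).mp hxY with ⟨h1, _⟩ | rfl | rfl
      · exact h1
      · exact absurd (hD3eq ▸ hx) hbD3
      · exact absurd rfl hxc
    -- so C2 ⊆ {b}, contradicting that C2 is dependent
    have hC2sub : C2 ⊆ {b} := by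
      intro x hx
      by_contra hxb
      simp only [Set.mem_singleton_iff] at hxb
      have hxX : x ∈ symmDiff C {a, b, c} := hU ▸ Or.inr hx
      rcases (hXmem x).mp hxX with ⟨h1, h2⟩ | rfl | rfl
      · exact (Set.disjoint_left.mp hdisj (hCsub x h1 h2)) hx
      · exact (Set.disjoint_left.mp hdisj ha1) hx
      · exact hxb rfl
    have hbindep : M.Indep {b} := by
      apply hZ.2
      constructor
      · intro x hx
        simp only [Set.mem_singleton_iff] at hx
        exact hx ▸ Or.inr (Or.inl rfl)
      · intro h
        exact hab (Set.mem_singleton_iff.mp (h (Or.inl rfl)))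
    exact hC2.1.not_indep (hbindep.subset hC2sub)

/-- Let `M` be a matroid in which the symmetric difference of any two circuits is a
disjoint union of circuits. Let `Z = {e1, e2, e3}` be a circuit of `M` (with `e1, e2, e3`
distinct) and `C` a circuit of `M` with `C ∩ Z = {e3}`. If `C ∆ Z` is not a circuit,
then `C ∆ Z` is a disjoint union of two circuits `C1` and `C2` containing `e1` and `e2`
respectively, and both `C1 ∆ Z` and `C2 ∆ Z` are circuits of `M`. -/
theorem circuit_triangle {α : Type*} (M : Matroid α)
    (hbin : ∀ C1 C2 : Set α, M.IsCircuit' C1 → M.IsCircuit' C2 →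
      M.IsCycle' (symmDiff C1 C2))
    (e1 e2 e3 : α) (h12 : e1 ≠ e2) (h13 : e1 ≠ e3) (h23 : e2 ≠ e3)
    (hZ : M.IsCircuit' {e1, e2, e3}) (C : Set α) (hC : M.IsCircuit' C)
    (hCZ : C ∩ {e1, e2, e3} = {e3})
    (hnot : ¬ M.IsCircuit' (symmDiff C {e1, e2, e3})) :
    ∃ C1 C2 : Set α, M.IsCircuit' C1 ∧ M.IsCircuit' C2 ∧ Disjoint C1 C2 ∧
      symmDiff C {e1, e2, e3} = C1 ∪ C2 ∧ e1 ∈ C1 ∧ e2 ∈ C2 ∧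
      M.IsCircuit' (symmDiff C1 {e1, e2, e3}) ∧
      M.IsCircuit' (symmDiff C2 {e1, e2, e3}) := by
  have he3C : e3 ∈ C := by
    have h : e3 ∈ ({e3} : Set α) := rfl
    rw [← hCZ] at h
    exact h.1
  have he1C : e1 ∉ C := by
    intro h
    have : e1 ∈ C ∩ {e1, e2, e3} := ⟨h, Or.inl rfl⟩
    rw [hCZ] at this
    exact h13 this
  have he2C : e2 ∉ C := by
    intro h
    have : e2 ∈ C ∩ {e1, e2, e3} := ⟨h, Or.inr (Or.inl rfl)⟩
    rw [hCZ] at this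
    exact h23 this
  have hXmem := symmDiff_triple_mem C e1 e2 e3 he1C he2C he3C
  obtain ⟨𝒞, h𝒞circ, h𝒞disj, h𝒞U⟩ := hbin C {e1, e2, e3} hC hZ
  have hmeet : ∀ D ∈ 𝒞, e1 ∈ D ∨ e2 ∈ D := by
    intro D hD
    by_contra h
    push_neg at h
    have hDsub : D ⊆ C \ {e3} := by
      intro x hx
      have : x ∈ symmDiff C {e1, e2, e3} := h𝒞U ▸ Set.subset_sUnion_of_mem hD hx
      rcases (hXmem x).mp this with ⟨h1, h2⟩ | rfl | rfl
      · exact ⟨h1, h2⟩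
      · exact absurd hx h.1
      · exact absurd hx h.2
    have hss : D ⊂ C := hDsub.trans_ssubset (Set.sdiff_singleton_ssubset.mpr he3C)
    exact (h𝒞circ D hD).1.not_indep (hC.2 D hss)
  have he1X : e1 ∈ symmDiff C {e1, e2, e3} := (hXmem e1).mpr (Or.inr (Or.inl rfl))
  have he2X : e2 ∈ symmDiff C {e1, e2, e3} := (hXmem e2).mpr (Or.inr (Or.inr rfl))
  obtain ⟨C1, hC1m, he1C1⟩ := Set.mem_sUnion.mp (h𝒞U ▸ he1X)
  obtain ⟨C2, hC2m, he2C2⟩ := Set.mem_sUnion.mp (h𝒞U ▸ he2X)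
  have hne : C1 ≠ C2 := by
    rintro rfl
    apply hnot
    have hall : ∀ D ∈ 𝒞, D = C1 := by
      intro D hD
      by_contra hDne
      have hdj := h𝒞disj hD hC1m hDne
      rcases hmeet D hD with h | h
      · exact (Set.disjoint_left.mp hdj h) he1C1
      · exact (Set.disjoint_left.mp hdj h) he2C2
    have hXeq : symmDiff C {e1, e2, e3} = C1 := by
      rw [h𝒞U]
      apply subset_antisymm
      · exact Set.sUnion_subset fun D hD => (hall D hD) ▸ subset_rfl
      · exact Set.subset_sUnion_of_mem hC1m
    exact hXeq ▸ h𝒞circ C1 hC1m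
  have hdisj : Disjoint C1 C2 := h𝒞disj hC1m hC2m hne
  have hU : symmDiff C {e1, e2, e3} = C1 ∪ C2 := by
    rw [h𝒞U]
    apply subset_antisymm
    · apply Set.sUnion_subset
      intro D hD
      rcases hmeet D hD with h | h
      · have : D = C1 := by
          by_contra hDne
          exact (Set.disjoint_left.mp (h𝒞disj hD hC1m hDne) h) he1C1
        exact this ▸ Set.subset_union_left
      · have : D = C2 := by
          by_contra hDne
          exact (Set.disjoint_left.mp (h𝒞disj hD hC2m hDne) h) he2C2
        exact this ▸ Set.subset_union_right
    · exact Set.union_subset (Set.subset_sUnion_of_mem hC1m) (Set.subset_sUnion_of_mem hC2m)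
  have hC1c := h𝒞circ C1 hC1m
  have hC2c := h𝒞circ C2 hC2m
  refine ⟨C1, C2, hC1c, hC2c, hdisj, hU, he1C1, he2C2, ?_, ?_⟩
  · exact key M hbin e1 e2 e3 h12 hZ C hC he1C he2C he3C C1 C2 hC1c hC2c hdisj hU he1C1 he2C2
  · have hperm : ({e1, e2, e3} : Set α) = {e2, e1, e3} := by
      ext x; simp only [Set.mem_insert_iff, Set.mem_singleton_iff]; tauto
    rw [hperm]
    refine key M hbin e2 e1 e3 (Ne.symm h12) (hperm ▸ hZ) C hC he2C he1C he3C C2 C1 hC2c hC1c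
      hdisj.symm ?_ he2C2 he1C1
    rw [← hperm, hU, Set.union_comm]
end

section
/- Let M be a matroid with the property that for every two circuits C1, C2 of M the symmetric difference C1 △ C2 is a disjoint union of circuits of M (this property characterizes binary matroids). Let Z = {e1, e2, e3} be a circuit of M with e1, e2, e3 distinct, and let C be a circuit of M such that C ∩ Z = {e1, e2}. Then C △ Z is a circuit of M. -/
/-- Let `M` be a matroid in which the symmetric difference of any two circuits is a
disjoint union of circuits. Let `Z = {e1, e2, e3}` be a circuit of `M` (with `e1, e2, e3`
distinct) and `C` a circuit of `M` with `C ∩ Z = {e1, e2}`. Then `C ∆ Z` is a circuit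
of `M`. -/
theorem circuit_triangle_two {α : Type*} (M : Matroid α)
    (hbin : ∀ C1 C2 : Set α, M.IsCircuit' C1 → M.IsCircuit' C2 →
      M.IsCycle' (symmDiff C1 C2))
    (e1 e2 e3 : α) (h12 : e1 ≠ e2) (h13 : e1 ≠ e3) (h23 : e2 ≠ e3)
    (hZ : M.IsCircuit' {e1, e2, e3}) (C : Set α) (hC : M.IsCircuit' C)
    (hCZ : C ∩ {e1, e2, e3} = {e1, e2}) :
    M.IsCircuit' (symmDiff C {e1, e2, e3}) := by
  obtain ⟨𝒞, hcirc, hdisj, hunion⟩ := hbin C {e1, e2, e3} hC hZ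
  have he1C : e1 ∈ C := by
    have : e1 ∈ C ∩ {e1, e2, e3} := hCZ ▸ (by simp : e1 ∈ ({e1, e2} : Set α))
    exact this.1
  have he2C : e2 ∈ C := by
    have : e2 ∈ C ∩ {e1, e2, e3} := hCZ ▸ (by simp : e2 ∈ ({e1, e2} : Set α))
    exact this.1
  have he3C : e3 ∉ C := by
    intro h
    have : e3 ∈ ({e1, e2} : Set α) := hCZ ▸ ⟨h, by simp⟩
    simp only [Set.mem_insert_iff, Set.mem_singleton_iff] at this
    rcases this with h' | h' <;> [exact h13 h'.symm; exact h23 h'.symm]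
  have he3s : e3 ∈ symmDiff C {e1, e2, e3} := by
    rw [Set.mem_symmDiff]; right; exact ⟨by simp, he3C⟩
  -- every member of 𝒞 contains e3
  have hkey : ∀ D ∈ 𝒞, e3 ∈ D := by
    intro D hD
    by_contra h
    have hDsub : D ⊆ C := by
      intro x hx
      have hxs : x ∈ symmDiff C {e1, e2, e3} := by
        rw [hunion]; exact Set.subset_sUnion_of_mem hD hx
      rw [Set.mem_symmDiff] at hxs
      rcases hxs with ⟨hxC, _⟩ | ⟨hxZ, hxC⟩
      · exact hxC
      · rcases hxZ with rfl | rfl | rfl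
        · exact absurd he1C hxC
        · exact absurd he2C hxC
        · exact absurd hx h
    have he1D : e1 ∉ D := by
      intro hx
      have hxs : e1 ∈ symmDiff C {e1, e2, e3} := by
        rw [hunion]; exact Set.subset_sUnion_of_mem hD hx
      rw [Set.mem_symmDiff] at hxs
      rcases hxs with ⟨_, h'⟩ | ⟨_, h'⟩
      · exact h' (by simp)
      · exact h' he1C
    have hss : D ⊂ C := ⟨hDsub, fun hsub => he1D (hsub he1C)⟩
    exact (hcirc D hD).1.not_indep (hC.2 D hss)
  obtain ⟨D, hD, he3D⟩ : ∃ D ∈ 𝒞, e3 ∈ D := by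
    have := he3s
    rw [hunion] at this
    exact this
  have heq : symmDiff C {e1, e2, e3} = D := by
    apply Set.Subset.antisymm
    · rw [hunion]
      intro x hx
      obtain ⟨D', hD', hxD'⟩ := hx
      rcases eq_or_ne D' D with rfl | hne
      · exact hxD'
      · exact absurd (Set.not_disjoint_iff.mpr ⟨e3, hkey D' hD', he3D⟩)
          (fun h' => h' (hdisj hD' hD hne))
      
    · rw [hunion]; exact Set.subset_sUnion_of_mem hD
  rw [heq]
  exact hcirc D hD
end

section
/- Let G be a simple graph containing a triangle on vertices v, a, b; let e1 = va, e2 = vb, e3 = ab and Z = {e1, e2, e3}. Let C be the edge set of a cycle of G (a closed walk of length at least 3 with pairwise distinct internal vertices) such that C ∩ Z = {e3}. Then C △ Z is the edge set of a cycle of G if and only if v is not a vertex of the cycle with edge set C, i.e., v is not an endpoint of any edge of C. -/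
open SimpleGraph

namespace CycleSymmDiffAux

variable {V : Type*} {G : SimpleGraph V}

/-- Every vertex on the support of a non-nil walk lies in some edge of the walk. -/
lemma mem_edge_of_mem_support {x : V} :
    ∀ {u w : V} (p : G.Walk u w), ¬ p.Nil → x ∈ p.support → ∃ e ∈ p.edges, x ∈ e
  | _, _, .nil, hn, _ => absurd Walk.Nil.nil hn
  | u, w, @Walk.cons _ _ _ y _ h q, _, hx => by
    rw [Walk.support_cons, List.mem_cons] at hx
    rcases hx with rfl | hx
    · exact ⟨s(x, y), by simp, Sym2.mem_mk_left _ _⟩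
    · by_cases hq : q.Nil
      · rw [Walk.nil_iff_support_eq.mp hq, List.mem_singleton] at hx
        subst hx
        exact ⟨s(u, x), by simp, Sym2.mem_mk_right _ _⟩
      · obtain ⟨e, he, hxe⟩ := mem_edge_of_mem_support q hq hx
        exact ⟨e, by simp [he], hxe⟩

/-- If a path ends at `b` and contains an edge `s(a,b)`, then that edge is the last edge. -/
lemma exists_concat_of_mem_edges {b : V} :
    ∀ {x : V} (p : G.Walk x b), p.IsPath → ∀ {a : V}, a ≠ b → s(a, b) ∈ p.edges →
      ∃ (q : G.Walk x a) (h : G.Adj a b), p = q.concat h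
  | _, .nil, _, a, _, he => by simp at he
  | x, .cons h q, hp, a, hab, he => by
    rw [Walk.edges_cons, List.mem_cons] at he
    rw [Walk.cons_isPath_iff] at hp
    rcases he with he | he
    · rw [Sym2.eq_iff] at he
      rcases he with ⟨rfl, rfl⟩ | ⟨rfl, rfl⟩
      · have : q = Walk.nil := (Walk.isPath_iff_eq_nil (p := q)).mp hp.1
        subst this
        exact ⟨Walk.nil, h, rfl⟩
      · exact absurd (q.end_mem_support) hp.2
    · obtain ⟨r, h2, rfl⟩ := exists_concat_of_mem_edges q hp.1 hab he
      exact ⟨Walk.cons h r, h2, (Walk.concat_cons h r h2).symm⟩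

/-- A cycle cannot contain three distinct edges through a common vertex. -/
lemma not_three_edges {u : V} (c : G.Walk u u) (hc : c.IsCycle) {v : V} {f1 f2 f3 : Sym2 V}
    (h12 : f1 ≠ f2) (h13 : f1 ≠ f3) (h23 : f2 ≠ f3)
    (he1 : f1 ∈ c.edges) (he2 : f2 ∈ c.edges) (he3 : f3 ∈ c.edges)
    (hv1 : v ∈ f1) (hv2 : v ∈ f2) (hv3 : v ∈ f3) : False := by
  classical
  obtain ⟨y1, rfl⟩ := Sym2.mem_iff_exists.mp hv1
  have hvs : v ∈ c.support := c.fst_mem_support_of_mem_edges he1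
  set c' := c.rotate v hvs with hc'def
  have hc' : c'.IsCycle := hc.rotate hvs
  have hrot : ∀ f : Sym2 V, f ∈ c'.edges ↔ f ∈ c.edges :=
    fun f => (c.rotate_edges v hvs).mem_iff
  have he1' : s(v, y1) ∈ c'.edges := (hrot _).mpr he1
  have he2' : f2 ∈ c'.edges := (hrot _).mpr he2
  have he3' : f3 ∈ c'.edges := (hrot _).mpr he3
  clear_value c'
  obtain ⟨z, hvz, q, rfl⟩ := (Walk.not_nil_iff).mp hc'.not_nil
  obtain ⟨hq, hzq⟩ := (Walk.cons_isCycle_iff q hvz).mp hc'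
  -- any two edges of q through v are equal
  have key : ∀ e ∈ q.edges, ∀ e' ∈ q.edges, v ∈ e → v ∈ e' → e = e' := by
    intro e heq e' heq' hve hve'
    obtain ⟨w1, rfl⟩ := Sym2.mem_iff_exists.mp hve
    obtain ⟨w2, rfl⟩ := Sym2.mem_iff_exists.mp hve'
    rw [Sym2.eq_swap] at heq heq'
    have hw1 : w1 ≠ v := by
      rintro rfl
      exact G.irrefl (q.edges_subset_edgeSet heq)
    have hw2 : w2 ≠ v := by
      rintro rfl
      exact G.irrefl (q.edges_subset_edgeSet heq')
    obtain ⟨r, hr, rfl⟩ := exists_concat_of_mem_edges q hq hw1 heq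
    have hsupp : (r.concat hr).support = r.support ++ [v] := by
      rw [r.support_concat hr]
    have hvnr : v ∉ r.support := by
      have := (Walk.isPath_def _).mp hq
      rw [hsupp] at this
      exact fun hmem => (List.disjoint_of_nodup_append this) hmem (List.mem_singleton_self v)
    rw [Walk.edges_concat, List.concat_eq_append, List.mem_append, List.mem_singleton] at heq'
    rcases heq' with heq' | heq'
    · exact absurd (r.snd_mem_support_of_mem_edges heq') hvnr
    · calc s(v, w1) = s(w1, v) := Sym2.eq_swap
        _ = s(w2, v) := heq'.symm
        _ = s(v, w2) := Sym2.eq_swap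
  -- now case analysis
  rw [Walk.edges_cons, List.mem_cons] at he1' he2' he3'
  rcases he1' with h1 | h1 <;> rcases he2' with h2 | h2 <;> rcases he3' with h3 | h3
  · exact h12 (h1.trans h2.symm)
  · exact h12 (h1.trans h2.symm)
  · exact h13 (h1.trans h3.symm)
  · exact h23 (key _ h2 _ h3 hv2 hv3)
  · exact h23 (h2.trans h3.symm)
  · exact h13 (key _ h1 _ h3 hv1 hv3)
  · exact h12 (key _ h1 _ h2 hv1 hv2)
  · exact h12 (key _ h1 _ h2 hv1 hv2)

/-- Building the new cycle `v → a → ⋯ → b → v` from a path `p : a ⋯ b` avoiding `v`. -/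
lemma build {v a b : V} (hva : G.Adj v a) (hvb : G.Adj v b) (hne : a ≠ b)
    (p : G.Walk a b) (hp : p.IsPath) (hvp : v ∉ p.support) :
    ∃ (u : V) (w : G.Walk u u), w.IsCycle ∧
      ∀ e, e ∈ w.edges ↔ e = s(v, a) ∨ e = s(v, b) ∨ e ∈ p.edges := by
  refine ⟨v, Walk.cons hva (p.concat hvb.symm), ?_, ?_⟩
  · rw [Walk.cons_isCycle_iff]
    constructor
    · rw [← Walk.isPath_reverse_iff, Walk.reverse_concat]
      rw [Walk.cons_isPath_iff]
      exact ⟨hp.reverse, by simpa using hvp⟩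
    · rw [Walk.edges_concat, List.concat_eq_append, List.mem_append, List.mem_singleton]
      rintro (h | h)
      · exact hvp (p.fst_mem_support_of_mem_edges h)
      · rw [Sym2.eq_iff] at h
        rcases h with ⟨rfl, rfl⟩ | ⟨-, rfl⟩
        · exact hvb.ne rfl
        · exact hne rfl
  · intro e
    have hsw : s(b, v) = s(v, b) := Sym2.eq_swap
    rw [Walk.edges_cons, List.mem_cons, Walk.edges_concat, List.concat_eq_append,
      List.mem_append, List.mem_singleton, hsw]
    tauto

/-- Decomposition of a cycle through `b` containing the edge `s(a,b)`. -/
lemma decomp {a b : V} (hne : a ≠ b) (c : G.Walk b b) (hc : c.IsCycle)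
    (he : s(a, b) ∈ c.edges) :
    (∃ p : G.Walk a b, p.IsPath ∧ s(a, b) ∉ p.edges ∧
       (∀ e, e ∈ c.edges ↔ e = s(a, b) ∨ e ∈ p.edges) ∧ p.support ⊆ c.support) ∨
    (∃ p : G.Walk b a, p.IsPath ∧ s(a, b) ∉ p.edges ∧
       (∀ e, e ∈ c.edges ↔ e = s(a, b) ∨ e ∈ p.edges) ∧ p.support ⊆ c.support) := by
  obtain ⟨x, hbx, q, rfl⟩ := (Walk.not_nil_iff).mp hc.not_nil
  obtain ⟨hq, hnotin⟩ := (Walk.cons_isCycle_iff q hbx).mp hc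
  rw [Walk.edges_cons, List.mem_cons] at he
  rcases he with he | he
  · rw [Sym2.eq_iff] at he
    rcases he with ⟨rfl, rfl⟩ | ⟨rfl, -⟩
    · exact absurd rfl hne
    · refine Or.inl ⟨q, hq, ?_, ?_, ?_⟩
      · rwa [Sym2.eq_swap]
      · intro e
        rw [Walk.edges_cons, List.mem_cons, Sym2.eq_swap]
      · rw [Walk.support_cons]
        exact List.subset_cons_self _ _
  · obtain ⟨r, h2, rfl⟩ := exists_concat_of_mem_edges q hq hne he
    have hsupp : (r.concat h2).support = r.support ++ [b] := by
      rw [r.support_concat h2]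
    have hnd := (Walk.isPath_def _).mp hq
    rw [hsupp] at hnd
    have hbnr : b ∉ r.support :=
      fun hmem => (List.disjoint_of_nodup_append hnd) hmem (List.mem_singleton_self b)
    refine Or.inr ⟨Walk.cons hbx r, ?_, ?_, ?_, ?_⟩
    · rw [Walk.cons_isPath_iff]
      exact ⟨(Walk.isPath_def r).mpr (List.Nodup.of_append_left hnd), hbnr⟩
    · rw [Walk.edges_cons, List.mem_cons]
      rintro (h | h)
      · exact hnotin (h ▸ he)
      · exact hbnr (r.snd_mem_support_of_mem_edges h)
    · intro e
      rw [Walk.edges_cons, Walk.edges_concat, List.concat_eq_append, Walk.edges_cons,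
        List.mem_cons, List.mem_append, List.mem_singleton, List.mem_cons]
      tauto
    · rw [Walk.support_cons, Walk.support_cons, hsupp]
      intro y hy
      rw [List.mem_cons] at hy
      rcases hy with rfl | hy
      · exact List.mem_cons_self
      · exact List.mem_cons_of_mem _ (List.mem_append_left _ hy)

set_option maxHeartbeats 1000000 in
lemma backward_branch {v a b : V} (hva : G.Adj v a) (hvb : G.Adj v b) (hne : a ≠ b)
    (p : G.Walk a b) (hp : p.IsPath) (hvp : v ∉ p.support)
    (C : Set (Sym2 V)) (hCe : ∀ e, e ∈ C ↔ e = s(a, b) ∨ e ∈ p.edges)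
    (hnp : s(a, b) ∉ p.edges) (hpa : s(v, a) ∉ p.edges) (hpb : s(v, b) ∉ p.edges) :
    ∃ (u : V) (w : G.Walk u u), w.IsCycle ∧
      symmDiff C {s(v, a), s(v, b), s(a, b)} = {e | e ∈ w.edges} := by
  obtain ⟨u', w', hcyc, hedges⟩ := build hva hvb hne p hp hvp
  refine ⟨u', w', hcyc, ?_⟩
  ext e
  have n13 : s(v, a) ≠ s(a, b) := by
    intro h
    rw [Sym2.eq_iff] at h
    rcases h with ⟨rfl, -⟩ | ⟨rfl, -⟩
    · exact hva.ne rfl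
    · exact hvb.ne rfl
  have n23 : s(v, b) ≠ s(a, b) := by
    intro h
    rw [Sym2.eq_iff] at h
    rcases h with ⟨h1, -⟩ | ⟨h1, -⟩
    · exact hva.ne h1
    · exact hvb.ne h1
  have h1 : e = s(v, a) → e ∉ p.edges := fun h => h ▸ hpa
  have h2 : e = s(v, b) → e ∉ p.edges := fun h => h ▸ hpb
  have h3 : e = s(a, b) → e ∉ p.edges := fun h => h ▸ hnp
  have d13 : e = s(v, a) → e ≠ s(a, b) := fun h h' => n13 (h ▸ h')
  have d23 : e = s(v, b) → e ≠ s(a, b) := fun h h' => n23 (h ▸ h')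
  simp only [Set.mem_setOf_eq, hedges e, symmDiff_def, Set.sup_eq_union, Set.mem_union,
    Set.mem_diff, Set.mem_insert_iff, Set.mem_singleton_iff, hCe e]
  tauto

end CycleSymmDiffAux

/-- `C` is the edge set of a cycle of the simple graph `G`. -/
def IsCycleEdgeSet {V : Type*} (G : SimpleGraph V) (C : Set (Sym2 V)) : Prop :=
  ∃ (u : V) (w : G.Walk u u), w.IsCycle ∧ C = {e | e ∈ w.edges}

/-- Let `G` contain a triangle on vertices `v, a, b`, with edges
`e1 = s(v,a)`, `e2 = s(v,b)`, `e3 = s(a,b)`, and let `Z = {e1, e2, e3}`.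
If `C` is the edge set of a cycle of `G` with `C ∩ Z = {e3}`, then `C ∆ Z` is the
edge set of a cycle of `G` if and only if `v` is not an endpoint of any edge of `C`. -/
theorem cycle_symmDiff_triangle_iff {V : Type*} (G : SimpleGraph V) (v a b : V)
    (hva : G.Adj v a) (hvb : G.Adj v b) (hab : G.Adj a b)
    (C : Set (Sym2 V)) (hC : IsCycleEdgeSet G C)
    (hCZ : C ∩ {s(v, a), s(v, b), s(a, b)} = {s(a, b)}) :
    IsCycleEdgeSet G (symmDiff C {s(v, a), s(v, b), s(a, b)}) ↔
      ∀ e ∈ C, v ∉ e := by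
  classical
  obtain ⟨u, w, hw, rfl⟩ := hC
  set C := {e | e ∈ w.edges} with hCdef
  have hne : a ≠ b := hab.ne
  have n13 : s(v, a) ≠ s(a, b) := by
    intro h
    rw [Sym2.eq_iff] at h
    rcases h with ⟨rfl, -⟩ | ⟨rfl, -⟩
    · exact hva.ne rfl
    · exact hvb.ne rfl
  have n23 : s(v, b) ≠ s(a, b) := by
    intro h
    rw [Sym2.eq_iff] at h
    rcases h with ⟨h1, -⟩ | ⟨h1, -⟩
    · exact hva.ne h1
    · exact hvb.ne h1
  have n12 : s(v, a) ≠ s(v, b) := by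
    intro h
    rw [Sym2.eq_iff] at h
    rcases h with ⟨-, h1⟩ | ⟨h1, -⟩
    · exact hne h1
    · exact hvb.ne h1
  have h3C : s(a, b) ∈ C := by
    have : s(a, b) ∈ C ∩ {s(v, a), s(v, b), s(a, b)} := by
      rw [hCZ]; exact rfl
    exact this.1
  have h1C : s(v, a) ∉ C := by
    intro h
    have : s(v, a) ∈ C ∩ {s(v, a), s(v, b), s(a, b)} := ⟨h, by simp⟩
    rw [hCZ] at this
    exact n13 this
  have h2C : s(v, b) ∉ C := by
    intro h
    have : s(v, b) ∈ C ∩ {s(v, a), s(v, b), s(a, b)} := ⟨h, by simp⟩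
    rw [hCZ] at this
    exact n23 this
  constructor
  · -- forward
    rintro ⟨u2, w2, hw2, hset⟩ e heC hve
    have heZ : e ∉ ({s(v, a), s(v, b), s(a, b)} : Set (Sym2 V)) := by
      intro hz
      have : e ∈ C ∩ {s(v, a), s(v, b), s(a, b)} := ⟨heC, hz⟩
      rw [hCZ] at this
      rw [this] at hve
      rw [Sym2.mem_iff] at hve
      rcases hve with rfl | rfl
      · exact hva.ne rfl
      · exact hvb.ne rfl
    have hmem : ∀ f, f ∈ symmDiff C {s(v, a), s(v, b), s(a, b)} → f ∈ w2.edges := by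
      intro f hf
      rw [hset] at hf
      exact hf
    have he2 : e ∈ w2.edges := hmem e (by rw [symmDiff_def]; exact Or.inl ⟨heC, heZ⟩)
    have ha2 : s(v, a) ∈ w2.edges := hmem _ (by
      rw [symmDiff_def]; exact Or.inr ⟨by simp, h1C⟩)
    have hb2 : s(v, b) ∈ w2.edges := hmem _ (by
      rw [symmDiff_def]; exact Or.inr ⟨by simp, h2C⟩)
    exact CycleSymmDiffAux.not_three_edges w2 hw2
      (fun h => heZ (by rw [h]; simp)) (fun h => heZ (by rw [h]; simp)) n12
      he2 ha2 hb2 hve (Sym2.mem_mk_left _ _) (Sym2.mem_mk_left _ _)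
  · -- backward
    intro hv
    have hab' : s(a, b) ∈ w.edges := h3C
    have hb : b ∈ w.support := w.snd_mem_support_of_mem_edges hab'
    set c := w.rotate b hb with hcdef
    have hc : c.IsCycle := hw.rotate hb
    have hceC : ∀ f, f ∈ c.edges ↔ f ∈ C := fun f => (w.rotate_edges b hb).mem_iff
    have hvc : v ∉ c.support := by
      intro hvs
      obtain ⟨e, he, hvee⟩ := CycleSymmDiffAux.mem_edge_of_mem_support c hc.not_nil hvs
      exact hv e ((hceC e).mp he) hvee
    have heabc : s(a, b) ∈ c.edges := (hceC _).mpr h3C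
    rcases CycleSymmDiffAux.decomp hne c hc heabc with
      ⟨p, hp, hnp, hdec, hsub⟩ | ⟨p, hp, hnp, hdec, hsub⟩
    · have hvp : v ∉ p.support := fun h => hvc (hsub h)
      have hCe : ∀ e, e ∈ C ↔ e = s(a, b) ∨ e ∈ p.edges := fun e => by
        rw [← hceC e]; exact hdec e
      have hpa : s(v, a) ∉ p.edges := fun h => h1C ((hCe _).mpr (Or.inr h))
      have hpb : s(v, b) ∉ p.edges := fun h => h2C ((hCe _).mpr (Or.inr h))
      exact CycleSymmDiffAux.backward_branch hva hvb hne p hp hvp C hCe hnp hpa hpb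
    · have hvp : v ∉ p.support := fun h => hvc (hsub h)
      have hCe : ∀ e, e ∈ C ↔ e = s(b, a) ∨ e ∈ p.edges := fun e => by
        rw [← hceC e, Sym2.eq_swap (a := b)]; exact hdec e
      have hpa : s(v, a) ∉ p.edges := fun h => h1C ((hCe _).mpr (Or.inr h))
      have hpb : s(v, b) ∉ p.edges := fun h => h2C ((hCe _).mpr (Or.inr h))
      have hnp' : s(b, a) ∉ p.edges := by rwa [Sym2.eq_swap]
      have := CycleSymmDiffAux.backward_branch hvb hva hne.symm p hp hvp C hCe hnp' hpb hpa
      have hsets : ({s(v, b), s(v, a), s(b, a)} : Set (Sym2 V)) =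
          {s(v, a), s(v, b), s(a, b)} := by
        rw [Set.insert_comm, Sym2.eq_swap (a := b)]
      rwa [hsets] at this
end

section
/- Let G be a finite simple graph with an edge weight function w mapping each edge to a natural number, let T be a set of edges of G, and let k be a positive integer. Let (A1, B1) and (A2, B2) be partitions of V(G) such that for each i ∈ {1,2}, T ⊆ E(Ai, Bi) and the total weight of the edges in E(Ai, Bi) \ T is at most k. Then the total weight of the edges in E(A1 △ A2, A1 △ B2) is at most 2k. -/
/-- The set `E(A,B)` of edges of `G` with one endpoint in `A` and the other in `B`. -/
def finCut {V : Type*} [Fintype V] [DecidableEq V] (G : SimpleGraph V)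
    [DecidableRel G.Adj] (A B : Finset V) : Finset (Sym2 V) :=
  G.edgeFinset.filter (fun e => ∃ x ∈ A, ∃ y ∈ B, e = s(x, y))

/-- Lemma on two cuts: if `(A1, B1)` and `(A2, B2)` are cuts of `G` such that each
cut-set `E(Ai, Bi)` contains the terminal edges `T` and has nonterminal weight at most
`k`, then the cut `(A1 ∆ A2, A1 ∆ B2)` has weight at most `2k`. -/
theorem two_cuts_weight {V : Type*} [Fintype V] [DecidableEq V]
    (G : SimpleGraph V) [DecidableRel G.Adj] (w : Sym2 V → ℕ)
    (T : Finset (Sym2 V)) (hT : T ⊆ G.edgeFinset) (k : ℕ) (hk : 0 < k)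
    (A1 B1 A2 B2 : Finset V)
    (hpart1 : A1 ∪ B1 = Finset.univ) (hdisj1 : Disjoint A1 B1)
    (hpart2 : A2 ∪ B2 = Finset.univ) (hdisj2 : Disjoint A2 B2)
    (hT1 : T ⊆ finCut G A1 B1) (hT2 : T ⊆ finCut G A2 B2)
    (hw1 : ∑ e ∈ finCut G A1 B1 \ T, w e ≤ k)
    (hw2 : ∑ e ∈ finCut G A2 B2 \ T, w e ≤ k) :
    ∑ e ∈ finCut G (symmDiff A1 A2) (symmDiff A1 B2), w e ≤ 2 * k := by
  have hB1 : ∀ x : V, x ∈ B1 ↔ x ∉ A1 := by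
    intro x
    constructor
    · intro h h'; exact (Finset.disjoint_left.mp hdisj1) h' h
    · intro h
      have hx : x ∈ A1 ∪ B1 := hpart1 ▸ Finset.mem_univ x
      rcases Finset.mem_union.mp hx with h' | h'
      · exact absurd h' h
      · exact h'
  have hB2 : ∀ x : V, x ∈ B2 ↔ x ∉ A2 := by
    intro x
    constructor
    · intro h h'; exact (Finset.disjoint_left.mp hdisj2) h' h
    · intro h
      have hx : x ∈ A2 ∪ B2 := hpart2 ▸ Finset.mem_univ x
      rcases Finset.mem_union.mp hx with h' | h'
      · exact absurd h' h
      · exact h'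
  have hnT1 : ∀ u v : V, s(u, v) ∈ T → (u ∈ A1 ↔ v ∉ A1) := by
    intro u v hT'
    have h := hT1 hT'
    rw [finCut, Finset.mem_filter] at h
    obtain ⟨-, p, hp, q, hq, heq⟩ := h
    rw [Sym2.eq_iff] at heq
    rw [hB1] at hq
    rcases heq with ⟨rfl, rfl⟩ | ⟨rfl, rfl⟩ <;> tauto
  have hnT2 : ∀ u v : V, s(u, v) ∈ T → (u ∈ A2 ↔ v ∉ A2) := by
    intro u v hT'
    have h := hT2 hT'
    rw [finCut, Finset.mem_filter] at h
    obtain ⟨-, p, hp, q, hq, heq⟩ := h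
    rw [Sym2.eq_iff] at heq
    rw [hB2] at hq
    rcases heq with ⟨rfl, rfl⟩ | ⟨rfl, rfl⟩ <;> tauto
  have hsub : finCut G (symmDiff A1 A2) (symmDiff A1 B2) ⊆
      (finCut G A1 B1 \ T) ∪ (finCut G A2 B2 \ T) := by
    intro e he
    rw [finCut, Finset.mem_filter] at he
    obtain ⟨hedge, x, hx, y, hy, rfl⟩ := he
    rw [Finset.mem_symmDiff] at hx hy
    rw [hB2] at hy
    have hyA : y ∈ A1 ↔ y ∈ A2 := by tauto
    have hxA : ¬ (x ∈ A1 ↔ x ∈ A2) := by tauto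
    have hTmem : s(x, y) ∉ T := by
      intro hT'
      have h1 := hnT1 x y hT'
      have h2 := hnT2 x y hT'
      tauto
    simp only [Finset.mem_union, Finset.mem_sdiff, finCut, Finset.mem_filter]
    by_cases hc : y ∈ A1
    · -- y ∈ A1 and y ∈ A2
      have hd : y ∈ A2 := hyA.mp hc
      by_cases ha : x ∈ A1
      · -- then x ∉ A2 : cut2 with y ∈ A2, x ∈ B2
        have hb : x ∉ A2 := by tauto
        exact Or.inr ⟨⟨hedge, y, hd, x, (hB2 x).mpr hb, Sym2.eq_swap⟩, hTmem⟩
      · -- x ∉ A1 : cut1 with y ∈ A1, x ∈ B1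
        exact Or.inl ⟨⟨hedge, y, hc, x, (hB1 x).mpr ha, Sym2.eq_swap⟩, hTmem⟩
    · have hd : y ∉ A2 := fun h => hc (hyA.mpr h)
      by_cases ha : x ∈ A1
      · exact Or.inl ⟨⟨hedge, x, ha, y, (hB1 y).mpr hc, rfl⟩, hTmem⟩
      · have hb : x ∈ A2 := by tauto
        exact Or.inr ⟨⟨hedge, x, hb, y, (hB2 y).mpr hd, rfl⟩, hTmem⟩
  calc ∑ e ∈ finCut G (symmDiff A1 A2) (symmDiff A1 B2), w e
      ≤ ∑ e ∈ (finCut G A1 B1 \ T) ∪ (finCut G A2 B2 \ T), w e :=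
        Finset.sum_le_sum_of_subset hsub
    _ ≤ ∑ e ∈ (finCut G A1 B1 \ T) ∪ (finCut G A2 B2 \ T), w e
          + ∑ e ∈ (finCut G A1 B1 \ T) ∩ (finCut G A2 B2 \ T), w e :=
        Nat.le_add_right _ _
    _ = ∑ e ∈ finCut G A1 B1 \ T, w e + ∑ e ∈ finCut G A2 B2 \ T, w e :=
        Finset.sum_union_inter
    _ ≤ k + k := Nat.add_le_add hw1 hw2
    _ = 2 * k := (Nat.two_mul k).symm
end

section
/- Let k and q be positive integers and set p = 2k. Let G be a finite connected simple graph with an edge weight function w assigning to each edge a positive natural number (w(e) ≥ 1 for every edge e), and let T be a set of edges of G. Assume G is (pq, p)-unbreakable, i.e., there is no partition (A, B) of V(G) with |A| > pq, |B| > pq and |E(A,B)| ≤ p. Let (A1, B1) and (A2, B2) be partitions of V(G) such that for each i ∈ {1,2}, T ⊆ E(Ai, Bi) and the total weight of the edges in E(Ai, Bi) \ T is at most k. Then min(|A1 △ A2|, |A1 △ B2|) ≤ pq. -/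
lemma finCut_mem_of {V : Type*} [Fintype V] [DecidableEq V] (G : SimpleGraph V)
    [DecidableRel G.Adj] {A B : Finset V} {x y : V} (he : s(x,y) ∈ G.edgeFinset)
    (hx : x ∈ A) (hy : y ∈ B) : s(x,y) ∈ finCut G A B := by
  simp only [finCut, Finset.mem_filter]
  exact ⟨he, x, hx, y, hy, rfl⟩

lemma finCut_not_mem {V : Type*} [Fintype V] [DecidableEq V] (G : SimpleGraph V)
    [DecidableRel G.Adj] {A B : Finset V} (hd : Disjoint A B) {x y : V}
    (h : (x ∈ A ∧ y ∈ A) ∨ (x ∈ B ∧ y ∈ B)) : s(x,y) ∉ finCut G A B := by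
  simp only [finCut, Finset.mem_filter, not_and, not_exists]
  rintro - a ha b hb
  intro heq
  rw [Sym2.eq_iff] at heq
  have hda := Finset.disjoint_left.1 hd
  rcases heq with ⟨rfl, rfl⟩ | ⟨rfl, rfl⟩ <;> rcases h with ⟨h1, h2⟩ | ⟨h1, h2⟩ <;>
    first | exact hda h1 hb | exact hda h2 hb | exact hda ha h1 | exact hda ha h2 |
      exact hda hb h1 | exact hda hb h2 | exact hda h1 ha | exact hda h2 ha

/-- Let `k, q > 0`, `p = 2k`, and let `G` be a finite connected graph with positive
edge weights `w` and terminal edges `T`. Suppose `G` is `(pq, p)`-unbreakable: there is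
no partition `(A, B)` of the vertices with `|A| > pq`, `|B| > pq` and `|E(A,B)| ≤ p`.
If `(A1, B1)` and `(A2, B2)` are cuts with `T ⊆ E(Ai, Bi)` and nonterminal weight at
most `k`, then `min (|A1 ∆ A2|) (|A1 ∆ B2|) ≤ pq`. -/
theorem unbreakable_cuts_close {V : Type*} [Fintype V] [DecidableEq V]
    (G : SimpleGraph V) [DecidableRel G.Adj] (hconn : G.Connected)
    (w : Sym2 V → ℕ) (hw : ∀ e ∈ G.edgeSet, 1 ≤ w e)
    (T : Finset (Sym2 V)) (hT : T ⊆ G.edgeFinset) (k q : ℕ) (hk : 0 < k) (hq : 0 < q)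
    (hunbreak : ¬ ∃ A B : Finset V, A ∪ B = Finset.univ ∧ Disjoint A B ∧
      2 * k * q < A.card ∧ 2 * k * q < B.card ∧ (finCut G A B).card ≤ 2 * k)
    (A1 B1 A2 B2 : Finset V)
    (hpart1 : A1 ∪ B1 = Finset.univ) (hdisj1 : Disjoint A1 B1)
    (hpart2 : A2 ∪ B2 = Finset.univ) (hdisj2 : Disjoint A2 B2)
    (hT1 : T ⊆ finCut G A1 B1) (hT2 : T ⊆ finCut G A2 B2)
    (hw1 : ∑ e ∈ finCut G A1 B1 \ T, w e ≤ k)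
    (hw2 : ∑ e ∈ finCut G A2 B2 \ T, w e ≤ k) :
    min (symmDiff A1 A2).card (symmDiff A1 B2).card ≤ 2 * k * q := by
  by_contra hcon
  push_neg at hcon
  rw [lt_min_iff] at hcon
  obtain ⟨hA, hB⟩ := hcon
  set A := symmDiff A1 A2 with hAdef
  set B := symmDiff A1 B2 with hBdef
  have hmem1 : ∀ x : V, x ∈ B1 ↔ x ∉ A1 := by
    intro x
    have hx : x ∈ A1 ∪ B1 := by rw [hpart1]; exact Finset.mem_univ x
    rw [Finset.mem_union] at hx
    have := Finset.disjoint_left.1 hdisj1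
    tauto
  have hmem2 : ∀ x : V, x ∈ B2 ↔ x ∉ A2 := by
    intro x
    have hx : x ∈ A2 ∪ B2 := by rw [hpart2]; exact Finset.mem_univ x
    rw [Finset.mem_union] at hx
    have := Finset.disjoint_left.1 hdisj2
    tauto
  have hABu : A ∪ B = Finset.univ := by
    ext x
    simp only [Finset.mem_union, Finset.mem_symmDiff, hAdef, hBdef, hmem2 x,
      Finset.mem_univ, iff_true]
    tauto
  have hABd : Disjoint A B := by
    rw [Finset.disjoint_left]
    intro x hx hx'
    simp only [hAdef, hBdef, Finset.mem_symmDiff, hmem2 x] at hx hx'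
    tauto
  have hsub : finCut G A B ⊆ (finCut G A1 B1 \ T) ∪ (finCut G A2 B2 \ T) := by
    intro e he
    simp only [finCut, Finset.mem_filter] at he
    obtain ⟨heE, x, hx, y, hy, rfl⟩ := he
    simp only [hAdef, Finset.mem_symmDiff] at hx
    simp only [hBdef, Finset.mem_symmDiff, hmem2 y] at hy
    have heE' : s(y,x) ∈ G.edgeFinset := by rwa [Sym2.eq_swap]
    rw [Finset.mem_union, Finset.mem_sdiff, Finset.mem_sdiff]
    rcases hx with ⟨hx1, hx2⟩ | ⟨hx2, hx1⟩
    · rcases hy with ⟨hy1, hy2⟩ | ⟨hy2, hy1⟩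
      · -- x∈A1, x∉A2 ; y∈A1, y∈A2 : crosses cut 2, not cut 1
        push_neg at hy2
        refine Or.inr ⟨?_, ?_⟩
        · have : s(y,x) ∈ finCut G A2 B2 :=
            finCut_mem_of G heE' hy2 ((hmem2 x).2 hx2)
          rwa [Sym2.eq_swap] at this
        · intro hTm
          exact finCut_not_mem G hdisj1 (Or.inl ⟨hx1, hy1⟩) (hT1 hTm)
      · -- x∈A1, x∉A2 ; y∉A2... y∈B2 so y∉A2, y∉A1 : crosses cut 1, not cut 2
        refine Or.inl ⟨finCut_mem_of G heE hx1 ((hmem1 y).2 hy1), ?_⟩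
        intro hTm
        exact finCut_not_mem G hdisj2
          (Or.inr ⟨(hmem2 x).2 hx2, (hmem2 y).2 hy2⟩) (hT2 hTm)
    · rcases hy with ⟨hy1, hy2⟩ | ⟨hy2, hy1⟩
      · -- x∈A2, x∉A1 ; y∈A1, y∈A2 : crosses cut 1 (y∈A1, x∈B1), not cut 2
        push_neg at hy2
        refine Or.inl ⟨?_, ?_⟩
        · have : s(y,x) ∈ finCut G A1 B1 :=
            finCut_mem_of G heE' hy1 ((hmem1 x).2 hx1)
          rwa [Sym2.eq_swap] at this
        · intro hTm
          exact finCut_not_mem G hdisj2 (Or.inl ⟨hx2, hy2⟩) (hT2 hTm)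
      · -- x∈A2, x∉A1 ; y∉A1, y∉A2 : crosses cut 2 (x∈A2, y∈B2), not cut 1
        refine Or.inr ⟨finCut_mem_of G heE hx2 ((hmem2 y).2 hy2), ?_⟩
        intro hTm
        exact finCut_not_mem G hdisj1
          (Or.inr ⟨(hmem1 x).2 hx1, (hmem1 y).2 hy1⟩) (hT1 hTm)
  have hcard1 : (finCut G A1 B1 \ T).card ≤ k := by
    calc (finCut G A1 B1 \ T).card = ∑ e ∈ finCut G A1 B1 \ T, 1 := by simp
    _ ≤ ∑ e ∈ finCut G A1 B1 \ T, w e := by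
        refine Finset.sum_le_sum fun e he => hw e ?_
        have : e ∈ finCut G A1 B1 := (Finset.mem_sdiff.1 he).1
        simp only [finCut, Finset.mem_filter] at this
        exact (SimpleGraph.mem_edgeFinset).1 this.1
    _ ≤ k := hw1
  have hcard2 : (finCut G A2 B2 \ T).card ≤ k := by
    calc (finCut G A2 B2 \ T).card = ∑ e ∈ finCut G A2 B2 \ T, 1 := by simp
    _ ≤ ∑ e ∈ finCut G A2 B2 \ T, w e := by
        refine Finset.sum_le_sum fun e he => hw e ?_
        have : e ∈ finCut G A2 B2 := (Finset.mem_sdiff.1 he).1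
        simp only [finCut, Finset.mem_filter] at this
        exact (SimpleGraph.mem_edgeFinset).1 this.1
    _ ≤ k := hw2
  have hcut : (finCut G A B).card ≤ 2 * k := by
    calc (finCut G A B).card ≤ ((finCut G A1 B1 \ T) ∪ (finCut G A2 B2 \ T)).card :=
          Finset.card_le_card hsub
    _ ≤ (finCut G A1 B1 \ T).card + (finCut G A2 B2 \ T).card := Finset.card_union_le _ _
    _ ≤ k + k := Nat.add_le_add hcard1 hcard2
    _ = 2 * k := (two_mul k).symm
  exact hunbreak ⟨A, B, hABu, hABd, hA, hB, hcut⟩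
end

section
/- Let p and q be positive integers and let G be a finite connected simple graph. If there exists a partition (A, B) of V(G) with |A| > pq, |B| > pq and |E(A,B)| ≤ p, then G has a (q, p)-good edge separation, i.e., a partition (A', B') of V(G) such that |A'| > q, |B'| > q, |E(A',B')| ≤ p, and both induced subgraphs G[A'] and G[B'] are connected. -/
section Aux

variable {V : Type*} [Fintype V] [DecidableEq V] (G : SimpleGraph V) [DecidableRel G.Adj]

/-- Reachability inside a vertex set `S`. -/
def reachIn (S : Finset V) (u v : V) : Prop :=
  ∃ w : G.Walk u v, ∀ x ∈ w.support, x ∈ S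

variable {G}

lemma reachIn.mem_left {S : Finset V} {u v : V} (h : reachIn G S u v) : u ∈ S := by
  obtain ⟨w, hw⟩ := h; exact hw u w.start_mem_support

lemma reachIn.mem_right {S : Finset V} {u v : V} (h : reachIn G S u v) : v ∈ S := by
  obtain ⟨w, hw⟩ := h; exact hw v w.end_mem_support

lemma reachIn.refl {S : Finset V} {u : V} (h : u ∈ S) : reachIn G S u u :=
  ⟨SimpleGraph.Walk.nil, by simp [h]⟩

lemma reachIn.symm {S : Finset V} {u v : V} (h : reachIn G S u v) : reachIn G S v u := by
  obtain ⟨w, hw⟩ := h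
  exact ⟨w.reverse, fun x hx => hw x (by simpa [SimpleGraph.Walk.support_reverse] using hx)⟩

lemma reachIn.trans {S : Finset V} {u v x : V} (h : reachIn G S u v) (h' : reachIn G S v x) :
    reachIn G S u x := by
  obtain ⟨w, hw⟩ := h
  obtain ⟨w', hw'⟩ := h'
  exact ⟨w.append w', fun y hy => by
    rcases (SimpleGraph.Walk.mem_support_append_iff _ _).mp hy with h | h
    exacts [hw y h, hw' y h]⟩

lemma reachIn.adj {S : Finset V} {u v : V} (hu : u ∈ S) (hv : v ∈ S) (h : G.Adj u v) :
    reachIn G S u v :=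
  ⟨SimpleGraph.Walk.cons h SimpleGraph.Walk.nil, by
    intro x hx
    simp only [SimpleGraph.Walk.support_cons, SimpleGraph.Walk.support_nil,
      List.mem_cons, List.mem_singleton, List.not_mem_nil, or_false] at hx
    rcases hx with rfl | rfl
    · exact hu
    · exact hv⟩

lemma reachIn_of_mem_support {S : Finset V} {u v x : V} {w : G.Walk u v}
    (hw : ∀ y ∈ w.support, y ∈ S) (hx : x ∈ w.support) : reachIn G S u x :=
  ⟨w.takeUntil x hx, fun y hy => hw y (SimpleGraph.Walk.support_takeUntil_subset _ _ hy)⟩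

/-- Walking from inside `S` to outside `S`, there is an "exit edge" whose `S`-endpoint
is `reachIn S`-reachable from the start. -/
lemma exists_exit {S : Finset V} {u v : V} (w : G.Walk u v) (hu : u ∈ S) (hv : v ∉ S) :
    ∃ a b : V, reachIn G S u a ∧ G.Adj a b ∧ b ∉ S := by
  induction w with
  | nil => exact absurd hu hv
  | @cons u x v h w ih =>
    by_cases hx : x ∈ S
    · obtain ⟨a, b, hr, hab, hb⟩ := ih hx hv
      exact ⟨a, b, (reachIn.adj hu hx h).trans hr, hab, hb⟩
    · exact ⟨u, x, reachIn.refl hu, h, hx⟩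

/-- A set closed under taking `G`-edges within `S` is closed under `reachIn S`. -/
lemma reachIn_closed {S D : Finset V} (hcl : ∀ x ∈ D, ∀ y ∈ S, G.Adj x y → y ∈ D)
    {u v : V} (h : reachIn G S u v) (hu : u ∈ D) : v ∈ D := by
  obtain ⟨w, hw⟩ := h
  induction w with
  | nil => exact hu
  | @cons u x v h w ih =>
    refine ih ?_ (fun y hy => hw y (by simp [SimpleGraph.Walk.support_cons, hy]))
    exact hcl u hu x (hw x (by simp [SimpleGraph.Walk.support_cons])) h

lemma mem_finCut {A B : Finset V} {x y : V} (h : G.Adj x y) (hx : x ∈ A) (hy : y ∈ B) :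
    s(x, y) ∈ finCut G A B := by
  refine Finset.mem_filter.mpr ⟨SimpleGraph.mem_edgeFinset.mpr h, x, hx, y, hy, rfl⟩

lemma finCut_subset_finCut {A B C D : Finset V}
    (h : ∀ x y : V, G.Adj x y → x ∈ A → y ∈ B → (x ∈ C ∧ y ∈ D) ∨ (x ∈ D ∧ y ∈ C)) :
    finCut G A B ⊆ finCut G C D := by
  intro e he
  obtain ⟨hedge, x, hx, y, hy, rfl⟩ := Finset.mem_filter.mp he
  have hadj : G.Adj x y := SimpleGraph.mem_edgeFinset.mp hedge
  rcases h x y hadj hx hy with ⟨h1, h2⟩ | ⟨h1, h2⟩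
  · exact mem_finCut hadj h1 h2
  · rw [Sym2.eq_swap]
    exact mem_finCut hadj.symm h2 h1

/-- The key lemma: if `S` has more than `p*q` vertices, some vertex lies outside `S`,
and the cut around `S` has at most `p` edges, then some connected component of `G[S]`
has more than `q` vertices. -/
lemma exists_component {p q : ℕ} (hq : 0 < q)
    (hconn : G.Connected) {S : Finset V} {z : V} (hz : z ∉ S)
    (hcard : p * q < S.card) (hcut : (finCut G S Sᶜ).card ≤ p) :
    ∃ C : Finset V, C ⊆ S ∧ q < C.card ∧ (G.induce (C : Set V)).Connected ∧
      ∀ x ∈ C, ∀ y ∈ S, G.Adj x y → y ∈ C := by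
  classical
  have hexit : ∀ u ∈ S, ∃ a b : V, reachIn G S u a ∧ G.Adj a b ∧ b ∉ S := by
    intro u hu
    exact exists_exit (hconn.preconnected u z).some hu hz
  choose! a b hra hab hb using hexit
  have hmaps : ∀ u ∈ S, s(a u, b u) ∈ finCut G S Sᶜ := fun u hu =>
    mem_finCut (hab u hu) (hra u hu).mem_right (Finset.mem_compl.mpr (hb u hu))
  have hlt : (finCut G S Sᶜ).card * q < S.card :=
    lt_of_le_of_lt (Nat.mul_le_mul_right q hcut) hcard
  obtain ⟨e, _, hfib⟩ :=
    Finset.exists_lt_card_fiber_of_mul_lt_card_of_maps_to hmaps hlt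
  set F := S.filter (fun u => s(a u, b u) = e) with hF
  have hFne : F.Nonempty := Finset.card_pos.mp (lt_of_le_of_lt (Nat.zero_le _) hfib)
  obtain ⟨u₀, hu₀F⟩ := hFne
  obtain ⟨hu₀S, hu₀e⟩ := Finset.mem_filter.mp hu₀F
  set C := S.filter (reachIn G S u₀) with hC
  have hCS : C ⊆ S := Finset.filter_subset _ _
  have hmemC : ∀ {v}, v ∈ C ↔ v ∈ S ∧ reachIn G S u₀ v := fun {v} => Finset.mem_filter
  -- F ⊆ C
  have hFC : F ⊆ C := by
    intro u huF
    obtain ⟨huS, hue⟩ := Finset.mem_filter.mp huF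
    have heq : s(a u, b u) = s(a u₀, b u₀) := by rw [hue, hu₀e]
    have haeq : a u = a u₀ := by
      rcases Sym2.eq_iff.mp heq with ⟨h1, _⟩ | ⟨h1, h2⟩
      · exact h1
      · exact absurd ((hra u huS).mem_right) (h1 ▸ hb u₀ hu₀S)
    refine hmemC.mpr ⟨huS, ?_⟩
    exact ((hra u₀ hu₀S).trans (haeq ▸ (hra u huS).symm))
  have hqC : q < C.card := lt_of_lt_of_le hfib (Finset.card_le_card hFC)
  have hclosed : ∀ x ∈ C, ∀ y ∈ S, G.Adj x y → y ∈ C := by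
    intro x hx y hy hxy
    obtain ⟨hxS, hrx⟩ := hmemC.mp hx
    exact hmemC.mpr ⟨hy, hrx.trans (reachIn.adj hxS hy hxy)⟩
  refine ⟨C, hCS, hqC, ?_, hclosed⟩
  -- connectivity
  have hu₀C : u₀ ∈ C := hmemC.mpr ⟨hu₀S, reachIn.refl hu₀S⟩
  apply SimpleGraph.induce_connected_of_patches u₀ hu₀C
  intro v hv
  obtain ⟨hvS, w, hw⟩ := hmemC.mp hv
  refine ⟨{x | x ∈ w.support}, ?_, w.start_mem_support, w.end_mem_support, ?_⟩
  · intro x hx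
    exact hmemC.mpr ⟨hw x hx, reachIn_of_mem_support hw hx⟩
  · exact (w.connected_induce_support).preconnected _ _

end Aux

/-- If a finite connected graph `G` has a partition `(A, B)` of its vertices with
`|A| > pq`, `|B| > pq` and `|E(A,B)| ≤ p`, then `G` has a `(q,p)`-good edge separation:
a partition `(A', B')` with `|A'| > q`, `|B'| > q`, `|E(A',B')| ≤ p`, and both induced
subgraphs `G[A']` and `G[B']` connected. -/
theorem good_edge_separation_of_breakable {V : Type*} [Fintype V] [DecidableEq V]
    (G : SimpleGraph V) [DecidableRel G.Adj] (p q : ℕ) (hp : 0 < p) (hq : 0 < q)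
    (hconn : G.Connected) (A B : Finset V)
    (hpart : A ∪ B = Finset.univ) (hdisj : Disjoint A B)
    (hA : p * q < A.card) (hB : p * q < B.card) (hcut : (finCut G A B).card ≤ p) :
    ∃ A' B' : Finset V, A' ∪ B' = Finset.univ ∧ Disjoint A' B' ∧
      q < A'.card ∧ q < B'.card ∧ (finCut G A' B').card ≤ p ∧
      (G.induce (A' : Set V)).Connected ∧ (G.induce (B' : Set V)).Connected := by
  classical
  have hmemAB : ∀ x : V, x ∈ A ∨ x ∈ B := by
    intro x
    have := Finset.mem_univ x
    rw [← hpart, Finset.mem_union] at this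
    exact this
  have hBnotA : ∀ x ∈ B, x ∉ A := fun x hx hxA =>
    (Finset.disjoint_left.mp hdisj hxA) hx
  -- a vertex outside A
  obtain ⟨z, hzB⟩ : B.Nonempty :=
    Finset.card_pos.mp (lt_of_le_of_lt (Nat.zero_le _) hB)
  have hzA : z ∉ A := hBnotA z hzB
  -- cut around A
  have hcutA : (finCut G A Aᶜ).card ≤ p := by
    refine le_trans (Finset.card_le_card (finCut_subset_finCut ?_)) hcut
    intro x y hxy hx hy
    left
    refine ⟨hx, ?_⟩
    rcases hmemAB y with h | h
    · exact absurd h (Finset.mem_compl.mp hy)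
    · exact h
  -- first component C ⊆ A
  obtain ⟨C, hCA, hqC, hCconn, hCcl⟩ := exists_component hq hconn hzA hA hcutA
  have hCne : C.Nonempty := Finset.card_pos.mp (lt_of_le_of_lt (Nat.zero_le _) hqC)
  obtain ⟨u₀, hu₀C⟩ := hCne
  -- the cut around C is contained in the cut (A, B)
  have hcutCsub : finCut G C Cᶜ ⊆ finCut G A B := by
    refine finCut_subset_finCut ?_
    intro x y hxy hx hy
    left
    refine ⟨hCA hx, ?_⟩
    rcases hmemAB y with h | h
    · exact absurd (hCcl x hx y h hxy) (Finset.mem_compl.mp hy)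
    · exact h
  have hcutC : (finCut G C Cᶜ).card ≤ p := le_trans (Finset.card_le_card hcutCsub) hcut
  -- cut around Cᶜ
  have hcutCc : (finCut G Cᶜ Cᶜᶜ).card ≤ p := by
    rw [compl_compl]
    refine le_trans (Finset.card_le_card (finCut_subset_finCut ?_)) hcutC
    intro x y hxy hx hy
    right
    exact ⟨hx, hy⟩
  have hBCc : B ⊆ Cᶜ := fun x hx => Finset.mem_compl.mpr (fun hxC => hBnotA x hx (hCA hxC))
  have hcardCc : p * q < Cᶜ.card := lt_of_lt_of_le hB (Finset.card_le_card hBCc)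
  have hu₀Cc : u₀ ∉ Cᶜ := by simp [hu₀C]
  -- second component D ⊆ Cᶜ
  obtain ⟨D, hDCc, hqD, hDconn, hDcl⟩ := exists_component hq hconn hu₀Cc hcardCc hcutCc
  -- edges from D go to D or C
  have hDedge : ∀ x ∈ D, ∀ y, G.Adj x y → y ∈ D ∨ y ∈ C := by
    intro x hx y hxy
    by_cases hyC : y ∈ C
    · exact Or.inr hyC
    · exact Or.inl (hDcl x hx y (Finset.mem_compl.mpr hyC) hxy)
  have hCD : ∀ x ∈ C, x ∉ D := fun x hx hxD => Finset.mem_compl.mp (hDCc hxD) hx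
  refine ⟨D, Dᶜ, by simp, disjoint_compl_right, hqD, ?_, ?_, hDconn, ?_⟩
  · -- q < |Dᶜ|
    have hCDc : C ⊆ Dᶜ := fun x hx => Finset.mem_compl.mpr (hCD x hx)
    exact lt_of_lt_of_le hqC (Finset.card_le_card hCDc)
  · -- cut bound
    refine le_trans (Finset.card_le_card (le_trans (finCut_subset_finCut ?_) hcutCsub)) hcut
    intro x y hxy hx hy
    right
    refine ⟨hDCc hx, ?_⟩
    rcases hDedge x hx y hxy with h | h
    · exact absurd h (Finset.mem_compl.mp hy)
    · exact h
  · -- G[Dᶜ] connected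
    have hu₀Dc : u₀ ∈ (Dᶜ : Finset V) := Finset.mem_compl.mpr (hCD u₀ hu₀C)
    apply SimpleGraph.induce_connected_of_patches u₀ hu₀Dc
    intro v hv
    have hvD : v ∉ D := Finset.mem_compl.mp hv
    by_cases hvC : v ∈ C
    · refine ⟨(C : Set V), ?_, hu₀C, hvC, hCconn.preconnected _ _⟩
      intro x hx
      exact Finset.mem_coe.mpr (Finset.mem_compl.mpr (hCD x hx))
    · -- v ∈ Cᶜ; walk out of Cᶜ into C
      have hvCc : v ∈ Cᶜ := Finset.mem_compl.mpr hvC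
      obtain ⟨a, b, hra, hab, hb⟩ :=
        exists_exit (hconn.preconnected v u₀).some hvCc hu₀Cc
      have hbC : b ∈ C := by
        by_contra hbC
        exact hb (Finset.mem_compl.mpr hbC)
      obtain ⟨w, hw⟩ := hra
      -- the walk stays outside D
      have hwD : ∀ x ∈ w.support, x ∉ D := by
        intro x hx hxD
        exact hvD (reachIn_closed hDcl (reachIn_of_mem_support hw hx).symm hxD)
      refine ⟨{x | x ∈ w.support} ∪ (C : Set V), ?_, Or.inr hu₀C,
        Or.inl w.start_mem_support, ?_⟩
      · rintro x (hx | hx)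
        · exact Finset.mem_coe.mpr (Finset.mem_compl.mpr (hwD x hx))
        · exact Finset.mem_coe.mpr (Finset.mem_compl.mpr (hCD x hx))
      · exact (SimpleGraph.connected_induce_union
          (w.connected_induce_support).preconnected hCconn.preconnected w.end_mem_support hbC hab).preconnected _ _
end
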